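/- Let A be a real n×n matrix with xᵀAx > 0 for all nonzero real x, C a real m×m symmetric positive semidefinite matrix, B a real m×n matrix of full row rank, and α, β > 0. With M = (1/2)·[[αI + A, Bᵀ], [−B, βI + C]] and N = (1/2)·[[αI − A, −Bᵀ], [B, βI − C]], if λ ∈ ℂ and u ∈ ℂ^{n+m} is nonzero with N u = λ M u, then λ ≠ 1 and λ ≠ −1. -/

import Mathlib

open Matrix

/-- The shift-splitting matrix `M = (1/2)⬝[[αI + A, Bᵀ], [−B, βI + C]]`. -/
noncomputable def MSS {n m : ℕ} (A : Matrix (Fin n) (Fin n) ℝ) (B : Matrix (Fin m) (Fin n) ℝ)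
    (C : Matrix (Fin m) (Fin m) ℝ) (α β : ℝ) :
    Matrix (Fin n ⊕ Fin m) (Fin n ⊕ Fin m) ℝ :=
  (1 / 2 : ℝ) • Matrix.fromBlocks (α • (1 : Matrix (Fin n) (Fin n) ℝ) + A) Bᵀ (-B)
    (β • (1 : Matrix (Fin m) (Fin m) ℝ) + C)

/-- The shift-splitting matrix `N = (1/2)⬝[[αI − A, −Bᵀ], [B, βI − C]]`. -/
noncomputable def NSS {n m : ℕ} (A : Matrix (Fin n) (Fin n) ℝ) (B : Matrix (Fin m) (Fin n) ℝ)
    (C : Matrix (Fin m) (Fin m) ℝ) (α β : ℝ) :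
    Matrix (Fin n ⊕ Fin m) (Fin n ⊕ Fin m) ℝ :=
  (1 / 2 : ℝ) • Matrix.fromBlocks (α • (1 : Matrix (Fin n) (Fin n) ℝ) - A) (-Bᵀ) B
    (β • (1 : Matrix (Fin m) (Fin m) ℝ) - C)

lemma re_quad {k : Type*} [Fintype k] (P : Matrix k k ℝ) (z : k → ℂ) :
    (star z ⬝ᵥ ((P.map Complex.ofReal) *ᵥ z)).re
      = (fun i => (z i).re) ⬝ᵥ (P *ᵥ fun i => (z i).re)
        + (fun i => (z i).im) ⬝ᵥ (P *ᵥ fun i => (z i).im) := by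
  simp only [dotProduct, mulVec, Pi.star_apply, Matrix.map_apply, Finset.mul_sum,
    Complex.re_sum, ← Finset.sum_add_distrib]
  refine Finset.sum_congr rfl fun i _ => Finset.sum_congr rfl fun j _ => ?_
  simp [Complex.mul_re, Complex.mul_im]

lemma re_cross {k l : Type*} [Fintype k] [Fintype l] (B : Matrix l k ℝ) (x : k → ℂ)
    (y : l → ℂ) :
    (star x ⬝ᵥ ((Bᵀ.map Complex.ofReal) *ᵥ y)).re
      = (star y ⬝ᵥ ((B.map Complex.ofReal) *ᵥ x)).re := by
  simp only [dotProduct, mulVec, Pi.star_apply, Matrix.map_apply, Matrix.transpose_apply,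
    Finset.mul_sum, Complex.re_sum]
  rw [Finset.sum_comm]
  refine Finset.sum_congr rfl fun i _ => Finset.sum_congr rfl fun j _ => ?_
  simp [Complex.mul_re, Complex.mul_im]
  ring

lemma map_mulVec_re {k l : Type*} [Fintype k] (P : Matrix l k ℝ) (z : k → ℂ) (j : l) :
    (((P.map Complex.ofReal) *ᵥ z) j).re = (P *ᵥ fun i => (z i).re) j := by
  simp [mulVec, dotProduct, Complex.re_sum, Complex.mul_re]

lemma map_mulVec_im {k l : Type*} [Fintype k] (P : Matrix l k ℝ) (z : k → ℂ) (j : l) :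
    (((P.map Complex.ofReal) *ᵥ z) j).im = (P *ᵥ fun i => (z i).im) j := by
  simp [mulVec, dotProduct, Complex.im_sum, Complex.mul_im]

lemma map_neg' {k l : Type*} (B : Matrix l k ℝ) :
    (-B).map Complex.ofReal = -(B.map Complex.ofReal) := by
  ext i j; simp

lemma smul_one_map {k : Type*} [Fintype k] [DecidableEq k] (α : ℝ) :
    ((α • (1 : Matrix k k ℝ)).map Complex.ofReal) = (α : ℂ) • (1 : Matrix k k ℂ) := by
  ext i j; by_cases h : i = j <;> simp [Matrix.one_apply, h]

/-- In the shift-splitting setting, a generalized eigenvalue `λ` with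
`N u = λ M u`, `u ≠ 0`, satisfies `λ ≠ 1` and `λ ≠ −1`. -/
theorem eigenvalue_ne_one_and_ne_neg_one
    (n m : ℕ) (A : Matrix (Fin n) (Fin n) ℝ)
    (hA : ∀ x : Fin n → ℝ, x ≠ 0 → 0 < x ⬝ᵥ A.mulVec x)
    (C : Matrix (Fin m) (Fin m) ℝ) (hC : C.PosSemidef)
    (B : Matrix (Fin m) (Fin n) ℝ) (hB : B.rank = m)
    (α β : ℝ) (hα : 0 < α) (hβ : 0 < β)
    (lam : ℂ) (u : Fin n ⊕ Fin m → ℂ) (hu : u ≠ 0)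
    (heig : ((NSS A B C α β).map Complex.ofReal).mulVec u
      = lam • ((MSS A B C α β).map Complex.ofReal).mulVec u) :
    lam ≠ 1 ∧ lam ≠ -1 := by
  set x : Fin n → ℂ := fun i => u (Sum.inl i) with hx
  set y : Fin m → ℂ := fun i => u (Sum.inr i) with hy
  have hxy : u = Sum.elim x y := by funext i; cases i <;> rfl
  constructor
  · -- lam ≠ 1
    rintro rfl
    -- (M - N) u = 0
    have hdiff : MSS A B C α β - NSS A B C α β = Matrix.fromBlocks A Bᵀ (-B) C := by
      unfold MSS NSS
      ext (i | i) (j | j) <;>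
        simp [Matrix.fromBlocks, Matrix.sub_apply, Matrix.smul_apply, Matrix.add_apply] <;> ring
    have hmapsub : ((MSS A B C α β - NSS A B C α β).map Complex.ofReal)
        = (MSS A B C α β).map Complex.ofReal - (NSS A B C α β).map Complex.ofReal := by
      ext i j; simp
    have h0 : ((Matrix.fromBlocks A Bᵀ (-B) C).map Complex.ofReal) *ᵥ u = 0 := by
      rw [← hdiff, hmapsub, Matrix.sub_mulVec, heig, one_smul, sub_self]
    rw [Matrix.fromBlocks_map, hxy, Matrix.fromBlocks_mulVec] at h0
    have eq1 : (A.map Complex.ofReal) *ᵥ x + (Bᵀ.map Complex.ofReal) *ᵥ y = 0 := by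
      funext i; exact congrFun h0 (Sum.inl i)
    have eq2 : -((B.map Complex.ofReal) *ᵥ x) + (C.map Complex.ofReal) *ᵥ y = 0 := by
      funext i
      have h := congrFun h0 (Sum.inr i)
      simpa [map_neg', Matrix.neg_mulVec] using h
    have eq2' : (C.map Complex.ofReal) *ᵥ y = (B.map Complex.ofReal) *ᵥ x := by
      have := eq2; linear_combination (norm := module) this
    -- dot with star x
    have key : (star x ⬝ᵥ ((A.map Complex.ofReal) *ᵥ x)).re
        + (star y ⬝ᵥ ((C.map Complex.ofReal) *ᵥ y)).re = 0 := by
      have h1 : star x ⬝ᵥ ((A.map Complex.ofReal) *ᵥ x)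
          + star x ⬝ᵥ ((Bᵀ.map Complex.ofReal) *ᵥ y) = 0 := by
        rw [← dotProduct_add, eq1, dotProduct_zero]
      have h2 := re_cross B x y
      have h3 : (star x ⬝ᵥ ((A.map Complex.ofReal) *ᵥ x)).re
          + (star x ⬝ᵥ ((Bᵀ.map Complex.ofReal) *ᵥ y)).re = 0 := by
        have := congrArg Complex.re h1
        simpa [Complex.add_re] using this
      rw [← h3, h2, eq2']
    rw [re_quad, re_quad] at key
    have hCnn : ∀ v : Fin m → ℝ, 0 ≤ v ⬝ᵥ C *ᵥ v := fun v => by simpa using hC.dotProduct_mulVec_nonneg v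
    have hAnn : ∀ v : Fin n → ℝ, 0 ≤ v ⬝ᵥ A *ᵥ v := fun v => by
      rcases eq_or_ne v 0 with rfl | hv
      · simp
      · exact (hA v hv).le
    have hxr : (fun i => (x i).re) = 0 := by
      by_contra h
      have := hA _ h
      have c1 := hAnn (fun i => (x i).im)
      have c2 := hCnn (fun i => (y i).re)
      have c3 := hCnn (fun i => (y i).im)
      linarith
    have hxi : (fun i => (x i).im) = 0 := by
      by_contra h
      have := hA _ h
      have c1 := hAnn (fun i => (x i).re)
      have c2 := hCnn (fun i => (y i).re)
      have c3 := hCnn (fun i => (y i).im)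
      linarith
    have hx0 : x = 0 := by
      funext i
      have h1 := congrFun hxr i
      have h2 := congrFun hxi i
      exact Complex.ext h1 h2
    have hBty : (Bᵀ.map Complex.ofReal) *ᵥ y = 0 := by
      rw [hx0] at eq1; simpa using eq1
    -- injectivity of Bᵀ
    have hker : ∀ v : Fin m → ℝ, Bᵀ *ᵥ v = 0 → v = 0 := by
      rw [← Matrix.ker_mulVecLin_eq_bot_iff]
      have hrank : Bᵀ.rank = m := by rw [Matrix.rank_transpose]; exact hB
      have h1 := (Bᵀ).mulVecLin.finrank_range_add_finrank_ker
      rw [show Module.finrank ℝ (LinearMap.range (Bᵀ).mulVecLin) = Bᵀ.rank from rfl,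
        hrank] at h1
      have hdom : Module.finrank ℝ (Fin m → ℝ) = m := Module.finrank_fin_fun ℝ
      rw [hdom] at h1
      have : Module.finrank ℝ (LinearMap.ker (Bᵀ).mulVecLin) = 0 := by omega
      exact Submodule.finrank_eq_zero.mp this
    have hyr : (fun i => (y i).re) = 0 := by
      apply hker
      funext j
      have := congrFun hBty j
      have h := congrArg Complex.re this
      simpa [map_mulVec_re] using h
    have hyi : (fun i => (y i).im) = 0 := by
      apply hker
      funext j
      have := congrFun hBty j
      have h := congrArg Complex.im this
      simpa [map_mulVec_im] using h
    apply hu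
    funext i
    rw [hxy]
    cases i with
    | inl i => exact congrFun hx0 i
    | inr i =>
      have h1 := congrFun hyr i
      have h2 := congrFun hyi i
      exact Complex.ext h1 h2
  · -- lam ≠ -1
    rintro rfl
    have hsum : MSS A B C α β + NSS A B C α β
        = Matrix.fromBlocks (α • (1 : Matrix (Fin n) (Fin n) ℝ)) 0 0
            (β • (1 : Matrix (Fin m) (Fin m) ℝ)) := by
      unfold MSS NSS
      ext (i | i) (j | j) <;>
        simp [Matrix.fromBlocks, Matrix.sub_apply, Matrix.smul_apply, Matrix.add_apply,
          Matrix.one_apply] <;> ring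
    have hmapadd : ((MSS A B C α β + NSS A B C α β).map Complex.ofReal)
        = (MSS A B C α β).map Complex.ofReal + (NSS A B C α β).map Complex.ofReal := by
      ext i j; simp
    have h0 : ((Matrix.fromBlocks (α • (1 : Matrix (Fin n) (Fin n) ℝ)) 0 0
        (β • (1 : Matrix (Fin m) (Fin m) ℝ))).map Complex.ofReal) *ᵥ u = 0 := by
      rw [← hsum, hmapadd, Matrix.add_mulVec, heig, neg_one_smul]
      exact add_neg_cancel _
    rw [Matrix.fromBlocks_map, hxy, Matrix.fromBlocks_mulVec] at h0
    have hz : ((0 : Matrix (Fin n) (Fin m) ℝ)).map Complex.ofReal = 0 := by ext i j; simp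
    have hz' : ((0 : Matrix (Fin m) (Fin n) ℝ)).map Complex.ofReal = 0 := by ext i j; simp
    rw [smul_one_map, smul_one_map, hz, hz'] at h0
    simp only [Matrix.zero_mulVec, add_zero, zero_add, Matrix.smul_mulVec,
      Matrix.one_mulVec] at h0
    apply hu
    funext i
    rw [hxy]
    cases i with
    | inl i =>
      have h := congrFun h0 (Sum.inl i)
      have hα' : (α : ℂ) ≠ 0 := by exact_mod_cast hα.ne'
      have : (α : ℂ) • x i = 0 := h
      simpa [smul_eq_mul, hα'] using this
    | inr i =>
      have h := congrFun h0 (Sum.inr i)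
      have hβ' : (β : ℂ) ≠ 0 := by exact_mod_cast hβ.ne'
      have : (β : ℂ) • y i = 0 := h
      simpa [smul_eq_mul, hβ'] using this
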